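/- Let A be an L-invariant subset of the Manhattan plane ℝ₁² and p ∈ ℝ₁². If every one of the four quadrants of p has nonempty intersection with A, then p belongs to A. -/

import Mathlib

open Set Topology Filter

/-- The taxicab (ℓ¹) distance on the plane, making `ℝ × ℝ` the Manhattan plane ℝ₁². -/
def taxiDist (p q : ℝ × ℝ) : ℝ := |p.1 - q.1| + |p.2 - q.2|

/-- Horizontal hatching `L_x(A)`. -/
def hatchX (A : Set (ℝ × ℝ)) : Set (ℝ × ℝ) :=
  {p | ∃ a ∈ A, ∃ b ∈ A, a.2 = p.2 ∧ b.2 = p.2 ∧ a.1 ≤ p.1 ∧ p.1 ≤ b.1}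

/-- Vertical hatching `L_y(A)`. -/
def hatchY (A : Set (ℝ × ℝ)) : Set (ℝ × ℝ) :=
  {p | ∃ a ∈ A, ∃ b ∈ A, a.1 = p.1 ∧ b.1 = p.1 ∧ a.2 ≤ p.2 ∧ p.2 ≤ b.2}

/-- Double hatching `L(A) = L_x(L_y(A))`. -/
def doubleHatch (A : Set (ℝ × ℝ)) : Set (ℝ × ℝ) := hatchX (hatchY A)

/-- The real sign `+1` or `-1` associated to a Boolean sign. -/
def sgn (ε : Bool) : ℝ := if ε then 1 else -1

/-- The `ε₁ε₂`-quadrant of the point `p`: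
`Q_p^{ε₁ε₂} = {q | ε₁(q₁ - p₁) ≥ 0 ∧ ε₂(q₂ - p₂) ≥ 0}`. -/
def quadrant (p : ℝ × ℝ) (ε₁ ε₂ : Bool) : Set (ℝ × ℝ) :=
  {q | 0 ≤ sgn ε₁ * (q.1 - p.1) ∧ 0 ≤ sgn ε₂ * (q.2 - p.2)}

lemma hatchY_subset' (A : Set (ℝ × ℝ)) (hL : doubleHatch A = A) : hatchY A ⊆ A := by
  intro z hz
  rw [← hL]
  exact ⟨z, hz, z, hz, rfl, rfl, le_refl _, le_refl _⟩

lemma hatchX_subset' (A : Set (ℝ × ℝ)) (hL : doubleHatch A = A) : hatchX A ⊆ A := by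
  intro z hz
  rw [← hL]
  obtain ⟨a, ha, b, hb, h1, h2, h3, h4⟩ := hz
  exact ⟨a, ⟨a, ha, a, ha, rfl, rfl, le_refl _, le_refl _⟩,
    b, ⟨b, hb, b, hb, rfl, rfl, le_refl _, le_refl _⟩, h1, h2, h3, h4⟩

lemma crossX' (A : Set (ℝ × ℝ)) (hA : IsPathConnected A) {c d : ℝ × ℝ} (hc : c ∈ A)
    (hd : d ∈ A) {x : ℝ} (h1 : c.1 ≤ x) (h2 : x ≤ d.1) : ∃ q ∈ A, q.1 = x := by
  obtain ⟨γ, hγ⟩ := hA.joinedIn c hc d hd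
  have hcont : ContinuousOn (fun t => (γ.extend t).1) (Icc 0 1) :=
    (continuous_fst.comp γ.continuous_extend).continuousOn
  have h := intermediate_value_Icc (by norm_num : (0:ℝ) ≤ 1) hcont
  simp only [Path.extend_zero, Path.extend_one] at h
  obtain ⟨t, ht, hts⟩ := h ⟨h1, h2⟩
  refine ⟨γ.extend t, ?_, hts⟩
  rw [show γ.extend t = γ ⟨t, ht⟩ from γ.extend_extends' ⟨t, ht⟩]
  exact hγ _

lemma crossY' (A : Set (ℝ × ℝ)) (hA : IsPathConnected A) {c d : ℝ × ℝ} (hc : c ∈ A)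
    (hd : d ∈ A) {y : ℝ} (h1 : c.2 ≤ y) (h2 : y ≤ d.2) : ∃ q ∈ A, q.2 = y := by
  obtain ⟨γ, hγ⟩ := hA.joinedIn c hc d hd
  have hcont : ContinuousOn (fun t => (γ.extend t).2) (Icc 0 1) :=
    (continuous_snd.comp γ.continuous_extend).continuousOn
  have h := intermediate_value_Icc (by norm_num : (0:ℝ) ≤ 1) hcont
  simp only [Path.extend_zero, Path.extend_one] at h
  obtain ⟨t, ht, hts⟩ := h ⟨h1, h2⟩
  refine ⟨γ.extend t, ?_, hts⟩
  rw [show γ.extend t = γ ⟨t, ht⟩ from γ.extend_extends' ⟨t, ht⟩]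
  exact hγ _

lemma exit_lemma' (A : Set (ℝ × ℝ)) (hA : IsPathConnected A) (p : ℝ × ℝ) (σ₁ σ₂ : ℝ)
    (hσ₁ : σ₁ ≠ 0) (hσ₂ : σ₂ ≠ 0) {b a : ℝ × ℝ} (hb : b ∈ A) (ha : a ∈ A)
    (hb1 : σ₁ * (b.1 - p.1) < 0) (hb2 : σ₂ * (b.2 - p.2) < 0)
    (ha1 : 0 ≤ σ₁ * (a.1 - p.1)) (_ha2 : 0 ≤ σ₂ * (a.2 - p.2)) :
    ∃ q ∈ A, (q.1 = p.1 ∧ σ₂ * (q.2 - p.2) ≤ 0) ∨ (q.2 = p.2 ∧ σ₁ * (q.1 - p.1) ≤ 0) := by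
  obtain ⟨γ, hγ⟩ := hA.joinedIn b hb a ha
  set f : ℝ → ℝ := fun t => σ₁ * ((γ.extend t).1 - p.1) with hf_def
  set g : ℝ → ℝ := fun t => σ₂ * ((γ.extend t).2 - p.2) with hg_def
  have hf : Continuous f :=
    continuous_const.mul ((continuous_fst.comp γ.continuous_extend).sub continuous_const)
  have hg : Continuous g :=
    continuous_const.mul ((continuous_snd.comp γ.continuous_extend).sub continuous_const)
  set S : Set ℝ := Icc 0 1 ∩ (f ⁻¹' Ici 0 ∪ g ⁻¹' Ici 0) with hS_def
  have hSc : IsClosed S :=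
    isClosed_Icc.inter ((isClosed_Ici.preimage hf).union (isClosed_Ici.preimage hg))
  have h1f : f 1 = σ₁ * (a.1 - p.1) := by simp [hf_def]
  have h0f : f 0 = σ₁ * (b.1 - p.1) := by simp [hf_def]
  have h0g : g 0 = σ₂ * (b.2 - p.2) := by simp [hg_def]
  have h1S : (1:ℝ) ∈ S := ⟨⟨zero_le_one, le_refl 1⟩, Or.inl (by rw [mem_preimage, h1f]; exact ha1)⟩
  have hbdd : BddBelow S := ⟨0, fun t ht => ht.1.1⟩
  have htS : sInf S ∈ S := hSc.csInf_mem ⟨1, h1S⟩ hbdd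
  have h0S : (0:ℝ) ∉ S := by
    rintro ⟨-, h | h⟩
    · rw [mem_preimage, h0f] at h; exact absurd hb1 (not_lt.2 h)
    · rw [mem_preimage, h0g] at h; exact absurd hb2 (not_lt.2 h)
  have ht0 : 0 < sInf S := by
    rcases lt_or_eq_of_le (le_csInf ⟨1, h1S⟩ fun t ht => ht.1.1) with h | h
    · exact h
    · exact absurd (h ▸ htS) h0S
  have hneg : ∀ t < sInf S, f t < 0 ∧ g t < 0 := by
    intro t ht
    rcases lt_or_ge t 0 with h | h
    · have he : γ.extend t = b := γ.extend_of_le_zero h.le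
      constructor
      · show σ₁ * ((γ.extend t).1 - p.1) < 0; rw [he]; exact hb1
      · show σ₂ * ((γ.extend t).2 - p.2) < 0; rw [he]; exact hb2
    · have htS' : t ∉ S := fun hmem => absurd (csInf_le hbdd hmem) (not_le.2 ht)
      have ht1 : t ≤ 1 := ht.le.trans htS.1.2
      have hor : ¬ (0 ≤ f t ∨ 0 ≤ g t) := by
        intro hor
        exact htS' ⟨⟨h, ht1⟩, by rcases hor with h' | h'; exacts [Or.inl h', Or.inr h']⟩
      push_neg at hor
      exact hor
  haveI : (𝓝[Iio (sInf S)] (sInf S)).NeBot := nhdsLT_neBot _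
  have hfle : f (sInf S) ≤ 0 :=
    le_of_tendsto (x := 𝓝[Iio (sInf S)] (sInf S))
      ((hf.tendsto _).mono_left nhdsWithin_le_nhds)
      (eventually_nhdsWithin_of_forall fun t ht => (hneg t ht).1.le)
  have hgle : g (sInf S) ≤ 0 :=
    le_of_tendsto (x := 𝓝[Iio (sInf S)] (sInf S))
      ((hg.tendsto _).mono_left nhdsWithin_le_nhds)
      (eventually_nhdsWithin_of_forall fun t ht => (hneg t ht).2.le)
  refine ⟨γ.extend (sInf S), ?_, ?_⟩
  · rw [show γ.extend (sInf S) = γ ⟨sInf S, htS.1⟩ from γ.extend_extends' ⟨sInf S, htS.1⟩]; exact hγ _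
  · rcases htS.2 with hm | hm
    · rw [mem_preimage, mem_Ici] at hm
      have hfz : f (sInf S) = 0 := le_antisymm hfle hm
      have hz : (γ.extend (sInf S)).1 - p.1 = 0 := by
        rcases mul_eq_zero.1 hfz with h | h
        · exact absurd h hσ₁
        · exact h
      exact Or.inl ⟨by linarith [sub_eq_zero.1 hz], hgle⟩
    · rw [mem_preimage, mem_Ici] at hm
      have hgz : g (sInf S) = 0 := le_antisymm hgle hm
      have hz : (γ.extend (sInf S)).2 - p.2 = 0 := by
        rcases mul_eq_zero.1 hgz with h | h
        · exact absurd h hσ₂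
        · exact h
      exact Or.inr ⟨by linarith [sub_eq_zero.1 hz], hfle⟩

set_option maxHeartbeats 800000 in
/-- If `A` is L-invariant (i.e. path connected with `L(A) = A`) and every one of the
four quadrants of `p` meets `A`, then `p ∈ A`. -/
theorem mem_of_quadrants_of_LInvariant (A : Set (ℝ × ℝ)) (hA : IsPathConnected A)
    (hL : doubleHatch A = A) (p : ℝ × ℝ)
    (h : ∀ ε₁ ε₂ : Bool, (A ∩ quadrant p ε₁ ε₂).Nonempty) :
    p ∈ A := by
  by_contra hp
  have hY := hatchY_subset' A hL
  have hX := hatchX_subset' A hL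
  obtain ⟨a, haA, ha⟩ := h true true
  obtain ⟨b, hbA, hb⟩ := h false false
  obtain ⟨c, hcA, hc⟩ := h true false
  obtain ⟨d, hdA, hd⟩ := h false true
  norm_num [quadrant, sgn] at ha hb hc hd
  have ha1 : p.1 ≤ a.1 := by nlinarith [ha.1]
  have ha2 : p.2 ≤ a.2 := by nlinarith [ha.2]
  have hb1 : b.1 ≤ p.1 := by nlinarith [hb.1]
  have hb2 : b.2 ≤ p.2 := by nlinarith [hb.2]
  have hc1 : p.1 ≤ c.1 := by nlinarith [hc.1]
  have hc2 : c.2 ≤ p.2 := by nlinarith [hc.2]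
  have hd1 : d.1 ≤ p.1 := by nlinarith [hd.1]
  have hd2 : p.2 ≤ d.2 := by nlinarith [hd.2]
  -- a point of A on the vertical line through p
  obtain ⟨v, hvA, hv1⟩ := crossX' A hA hdA haA hd1 ha1
  -- a point of A on the horizontal line through p
  obtain ⟨w, hwA, hw2⟩ := crossY' A hA hbA haA hb2 ha2
  have Vsign : (∀ q ∈ A, q.1 = p.1 → q.2 < p.2) ∨ (∀ q ∈ A, q.1 = p.1 → p.2 < q.2) := by
    rcases lt_or_ge v.2 p.2 with h1 | h1
    · left; intro q hq hq1
      by_contra h2; push_neg at h2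
      exact hp (hY ⟨v, hvA, q, hq, hv1, hq1, h1.le, h2⟩)
    · right; intro q hq hq1
      by_contra h2; push_neg at h2
      exact hp (hY ⟨q, hq, v, hvA, hq1, hv1, h2, h1⟩)
  have Hsign : (∀ q ∈ A, q.2 = p.2 → q.1 < p.1) ∨ (∀ q ∈ A, q.2 = p.2 → p.1 < q.1) := by
    rcases lt_or_ge w.1 p.1 with h1 | h1
    · left; intro q hq hq2
      by_contra h2; push_neg at h2
      exact hp (hX ⟨w, hwA, q, hq, hw2, hq2, h1.le, h2⟩)
    · right; intro q hq hq2
      by_contra h2; push_neg at h2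
      exact hp (hX ⟨q, hq, w, hwA, hq2, hw2, h2, h1⟩)
  rcases Vsign with V | V <;> rcases Hsign with H | H
  · -- all vertical below, all horizontal left: start from a ∈ Q⁺⁺, σ = (-1,-1)
    have hs1 : p.1 < a.1 := lt_of_le_of_ne ha1 fun h' => absurd (V a haA h'.symm) (not_lt.2 ha2)
    have hs2 : p.2 < a.2 := lt_of_le_of_ne ha2 fun h' => absurd (H a haA h'.symm) (not_lt.2 ha1)
    obtain ⟨q, hqA, hq⟩ := exit_lemma' A hA p (-1) (-1) (by norm_num) (by norm_num)
      haA hbA (by linarith) (by linarith) (by linarith) (by linarith)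
    rcases hq with ⟨h1, h2⟩ | ⟨h1, h2⟩
    · exact absurd (V q hqA h1) (not_lt.2 (by linarith))
    · exact absurd (H q hqA h1) (not_lt.2 (by linarith))
  · -- all vertical below, all horizontal right: start from d ∈ Q⁻⁺, σ = (1,-1), target c
    have hs1 : d.1 < p.1 := lt_of_le_of_ne hd1 fun h' => absurd (V d hdA h') (not_lt.2 hd2)
    have hs2 : p.2 < d.2 := lt_of_le_of_ne hd2 fun h' => absurd (H d hdA h'.symm) (not_lt.2 hd1)
    obtain ⟨q, hqA, hq⟩ := exit_lemma' A hA p 1 (-1) (by norm_num) (by norm_num)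
      hdA hcA (by linarith) (by linarith) (by linarith) (by linarith)
    rcases hq with ⟨h1, h2⟩ | ⟨h1, h2⟩
    · exact absurd (V q hqA h1) (not_lt.2 (by linarith))
    · exact absurd (H q hqA h1) (not_lt.2 (by linarith))
  · -- all vertical above, all horizontal left: start from c ∈ Q⁺⁻, σ = (-1,1), target d
    have hs1 : p.1 < c.1 := lt_of_le_of_ne hc1 fun h' => absurd (V c hcA h'.symm) (not_lt.2 hc2)
    have hs2 : c.2 < p.2 := lt_of_le_of_ne hc2 fun h' => absurd (H c hcA h') (not_lt.2 hc1)
    obtain ⟨q, hqA, hq⟩ := exit_lemma' A hA p (-1) 1 (by norm_num) (by norm_num)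
      hcA hdA (by linarith) (by linarith) (by linarith) (by linarith)
    rcases hq with ⟨h1, h2⟩ | ⟨h1, h2⟩
    · exact absurd (V q hqA h1) (not_lt.2 (by linarith))
    · exact absurd (H q hqA h1) (not_lt.2 (by linarith))
  · -- all vertical above, all horizontal right: start from b ∈ Q⁻⁻, σ = (1,1), target a
    have hs1 : b.1 < p.1 := lt_of_le_of_ne hb1 fun h' => absurd (V b hbA h') (not_lt.2 hb2)
    have hs2 : b.2 < p.2 := lt_of_le_of_ne hb2 fun h' => absurd (H b hbA h') (not_lt.2 hb1)
    obtain ⟨q, hqA, hq⟩ := exit_lemma' A hA p 1 1 (by norm_num) (by norm_num)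
      hbA haA (by linarith) (by linarith) (by linarith) (by linarith)
    rcases hq with ⟨h1, h2⟩ | ⟨h1, h2⟩
    · exact absurd (V q hqA h1) (not_lt.2 (by linarith))
    · exact absurd (H q hqA h1) (not_lt.2 (by linarith))
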